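/- Let H be a well-placed topological subgroup of a topological group G. If a continuous action of G on a compact Hausdorff space X is amenable, then the restricted action H ↷ X is amenable. -/

import Mathlib

open Filter Topology MeasureTheory UniformConvergence

/-- `Δ(G)`: finitely supported probability densities on `G`. -/
def IsDelta {G : Type*} (μ : G → ℝ) : Prop :=
  (Function.support μ).Finite ∧ (∀ x, 0 ≤ μ x) ∧ ∑ᶠ x, μ x = 1

/-- The pairing `⟨μ, f⟩ = ∑ₓ μ(x) · f(x)`. -/
noncomputable def dpair {G : Type*} (μ f : G → ℝ) : ℝ := ∑ᶠ x, μ x * f x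

/-- Left-translation action on densities: `(g · μ)(x) = μ(g⁻¹x)`. -/
def actD {G : Type*} [Group G] (g : G) (μ : G → ℝ) : G → ℝ := fun x => μ (g⁻¹ * x)

/-- Action on functionals: `(g · ξ)(f) = ξ(f ∘ λ_g)`. -/
def actF {G : Type*} [Group G] (g : G) (ξ : (G → ℝ) → ℝ) : (G → ℝ) → ℝ :=
  fun f => ξ fun x => f (g * x)

/-- The functional `f ↦ ⟨μ, f⟩` associated with a density `μ`. -/
noncomputable def toFunc {G : Type*} (μ : G → ℝ) : (G → ℝ) → ℝ := fun f => dpair μ f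

/-- Bounded right-uniformly continuous functions. -/
def IsRUCB {G : Type*} [Group G] [TopologicalSpace G] (f : G → ℝ) : Prop :=
  (∃ C : ℝ, ∀ x, |f x| ≤ C) ∧
  ∀ ε > (0 : ℝ), ∃ U ∈ nhds (1 : G), ∀ u ∈ U, ∀ x : G, |f x - f (u * x)| ≤ ε

/-- RUEB sets: sup-norm bounded, right-uniformly equicontinuous. -/
def IsRUEB {G : Type*} [Group G] [TopologicalSpace G] (B : Set (G → ℝ)) : Prop :=
  (∃ C : ℝ, ∀ f ∈ B, ∀ x : G, |f x| ≤ C) ∧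
  ∀ ε > (0 : ℝ), ∃ U ∈ nhds (1 : G), ∀ u ∈ U, ∀ f ∈ B, ∀ x : G, |f x - f (u * x)| ≤ ε

/-- Bounded left-uniformly continuous functions. -/
def IsLUCB {G : Type*} [Group G] [TopologicalSpace G] (f : G → ℝ) : Prop :=
  (∃ C : ℝ, ∀ x, |f x| ≤ C) ∧
  ∀ ε > (0 : ℝ), ∃ U ∈ nhds (1 : G), ∀ u ∈ U, ∀ x : G, |f x - f (x * u)| ≤ ε

/-- LUEB sets: sup-norm bounded, left-uniformly equicontinuous. -/
def IsLUEB {G : Type*} [Group G] [TopologicalSpace G] (B : Set (G → ℝ)) : Prop :=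
  (∃ C : ℝ, ∀ f ∈ B, ∀ x : G, |f x| ≤ C) ∧
  ∀ ε > (0 : ℝ), ∃ U ∈ nhds (1 : G), ∀ u ∈ U, ∀ f ∈ B, ∀ x : G, |f x - f (x * u)| ≤ ε

/-- The UEB uniformity (uniform convergence on RUEB sets) on the space of
functionals on functions on `G`. -/
noncomputable def uebUniformityR (G : Type*) [Group G] [TopologicalSpace G] :
    UniformSpace ((G → ℝ) → ℝ) :=
  ⨅ (B : Set (G → ℝ)) (_ : IsRUEB B),
    UniformSpace.comap (fun ξ => UniformFun.ofFun fun f : B => ξ (f : G → ℝ))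
      (UniformFun.uniformSpace (↥B) ℝ)

/-- The UEB topology associated with the right uniformity. -/
noncomputable def uebTopR (G : Type*) [Group G] [TopologicalSpace G] :
    TopologicalSpace ((G → ℝ) → ℝ) := (uebUniformityR G).toTopologicalSpace

/-- `Mean_u(G_r)`: the UEB-closure of `Δ(G)` inside the functionals. -/
noncomputable def MeanUR (G : Type*) [Group G] [TopologicalSpace G] :
    Set ((G → ℝ) → ℝ) :=
  @closure _ (uebTopR G) (toFunc '' {μ : G → ℝ | IsDelta μ})

/-- The UEB uniformity (uniform convergence on LUEB sets). -/
noncomputable def uebUniformityL (G : Type*) [Group G] [TopologicalSpace G] :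
    UniformSpace ((G → ℝ) → ℝ) :=
  ⨅ (B : Set (G → ℝ)) (_ : IsLUEB B),
    UniformSpace.comap (fun ξ => UniformFun.ofFun fun f : B => ξ (f : G → ℝ))
      (UniformFun.uniformSpace (↥B) ℝ)

/-- The UEB topology associated with the left uniformity. -/
noncomputable def uebTopL (G : Type*) [Group G] [TopologicalSpace G] :
    TopologicalSpace ((G → ℝ) → ℝ) := (uebUniformityL G).toTopologicalSpace

/-- `Mean_u(G_ℓ)`: the UEB-closure of `Δ(G)`. -/
noncomputable def MeanUL (G : Type*) [Group G] [TopologicalSpace G] :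
    Set ((G → ℝ) → ℝ) :=
  @closure _ (uebTopL G) (toFunc '' {μ : G → ℝ | IsDelta μ})

/-- Amenability of an action of a topological group on a topological space. -/
def AmenableAction {G : Type*} [Group G] [TopologicalSpace G]
    {X : Type*} [TopologicalSpace X] (act : G → X → X) : Prop :=
  ∃ (ι : Type) (pι : Preorder ι) (_ : Nonempty ι)
    (_ : IsDirected ι fun a b => pι.le a b)
    (μ : ι → X → (G → ℝ) → ℝ),
    (∀ i x, μ i x ∈ MeanUR G) ∧
    (∀ i, @Continuous X ((G → ℝ) → ℝ) inferInstance (uebTopR G) (μ i)) ∧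
    ∀ (g : G) (B : Set (G → ℝ)), IsRUEB B → ∀ ε > (0 : ℝ),
      ∃ i₀, ∀ i, pι.le i₀ i → ∀ x, ∀ f ∈ B,
        |actF g (μ i x) f - μ i (act g x) f| ≤ ε

/-- Skew-amenability of an action. -/
def SkewAmenableAction {G : Type*} [Group G] [TopologicalSpace G]
    {X : Type*} [TopologicalSpace X] (act : G → X → X) : Prop :=
  ∃ (ι : Type) (pι : Preorder ι) (_ : Nonempty ι)
    (_ : IsDirected ι fun a b => pι.le a b)
    (μ : ι → X → (G → ℝ) → ℝ),
    (∀ i x, μ i x ∈ MeanUL G) ∧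
    (∀ i, @Continuous X ((G → ℝ) → ℝ) inferInstance (uebTopL G) (μ i)) ∧
    ∀ (g : G) (B : Set (G → ℝ)), IsLUEB B → ∀ ε > (0 : ℝ),
      ∃ i₀, ∀ i, pι.le i₀ i → ∀ x, ∀ f ∈ B,
        |actF g (μ i x) f - μ i (act g x) f| ≤ ε

/-- AD-amenability (Anantharaman-Delaroche) of an action of a locally compact
group, with respect to a left Haar measure `ν`. -/
def ADAmenableAction {G : Type*} [Group G] [TopologicalSpace G] [MeasurableSpace G]
    (ν : Measure G) {X : Type*} [TopologicalSpace X] (act : G → X → X) : Prop :=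
  ∃ (ι : Type) (pι : Preorder ι) (_ : Nonempty ι)
    (_ : IsDirected ι fun a b => pι.le a b)
    (μ : ι → X → G → ℝ),
    (∀ i x, Integrable (μ i x) ν ∧ (∀ᵐ t ∂ν, 0 ≤ μ i x t) ∧ ∫ t, μ i x t ∂ν = 1) ∧
    (∀ i (h : G → ℝ), Continuous h → Tendsto h (cocompact G) (nhds 0) →
      Continuous fun x => ∫ t, h t * μ i x t ∂ν) ∧
    ∀ K : Set G, IsCompact K → ∀ ε > (0 : ℝ),
      ∃ i₀, ∀ i, pι.le i₀ i → ∀ g ∈ K, ∀ x,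
        ∫ t, |μ i x (g⁻¹ * t) - μ i (act g x) t| ∂ν ≤ ε

/-- Amenability of a topological group: a left-invariant mean on `RUCB(G)`. -/
def AmenableGroup (G : Type*) [Group G] [TopologicalSpace G] : Prop :=
  ∃ m : (G → ℝ) → ℝ,
    (∀ f h : G → ℝ, IsRUCB f → IsRUCB h → m (f + h) = m f + m h) ∧
    (∀ (c : ℝ) (f : G → ℝ), IsRUCB f → m (c • f) = c * m f) ∧
    (∀ f : G → ℝ, IsRUCB f → (∀ x, 0 ≤ f x) → 0 ≤ m f) ∧
    m (fun _ => 1) = 1 ∧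
    ∀ (g : G) (f : G → ℝ), IsRUCB f → m (fun x => f (g * x)) = m f

/-- Well-placed subgroups: there is an `H`-left-equivariant, right-uniformly
continuous map `G → Mean_u(H_r)` (uniform continuity spelled out via the basic
entourages of the right uniformity of `G` and the UEB pseudometrics). -/
def WellPlaced {G : Type*} [Group G] [TopologicalSpace G] (H : Subgroup G) : Prop :=
  ∃ φ : G → ((↥H → ℝ) → ℝ),
    (∀ g, φ g ∈ MeanUR ↥H) ∧
    (∀ (h : ↥H) (g : G), φ ((h : G) * g) = actF h (φ g)) ∧
    ∀ B : Set (↥H → ℝ), IsRUEB B → ∀ ε > (0 : ℝ), ∃ U ∈ nhds (1 : G),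
      ∀ x y : G, x * y⁻¹ ∈ U → ∀ f ∈ B, |φ x f - φ y f| ≤ ε

section UEBHelpers

open Filter Function

variable {G : Type*} [Group G] [TopologicalSpace G]

lemma isRUEB_empty : IsRUEB (∅ : Set (G → ℝ)) :=
  ⟨⟨0, fun _ hf => hf.elim⟩, fun _ _ => ⟨Set.univ, Filter.univ_mem,
    fun _ _ _ hf => hf.elim⟩⟩

lemma isRUEB_union {B B' : Set (G → ℝ)} (h : IsRUEB B) (h' : IsRUEB B') :
    IsRUEB (B ∪ B') := by
  obtain ⟨⟨C, hC⟩, hE⟩ := h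
  obtain ⟨⟨C', hC'⟩, hE'⟩ := h'
  refine ⟨⟨max C C', ?_⟩, ?_⟩
  · rintro f (hf | hf) x
    · exact (hC f hf x).trans (le_max_left _ _)
    · exact (hC' f hf x).trans (le_max_right _ _)
  · intro ε hε
    obtain ⟨U, hU, hU2⟩ := hE ε hε
    obtain ⟨U', hU', hU2'⟩ := hE' ε hε
    refine ⟨U ∩ U', Filter.inter_mem hU hU', ?_⟩
    rintro u ⟨hu, hu'⟩ f (hf | hf) x
    · exact hU2 u hu f hf x
    · exact hU2' u hu' f hf x

/-- The single-`B` building block of the UEB uniformity. -/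
noncomputable def uebB (G : Type*) [Group G] [TopologicalSpace G] (B : Set (G → ℝ)) :
    UniformSpace ((G → ℝ) → ℝ) :=
  UniformSpace.comap (fun ξ => UniformFun.ofFun fun f : B => ξ (f : G → ℝ))
    (UniformFun.uniformSpace (↥B) ℝ)

lemma uebB_basis (B : Set (G → ℝ)) :
    (@uniformity _ (uebB G B)).HasBasis (fun ε : ℝ => 0 < ε)
      (fun ε => {p : ((G → ℝ) → ℝ) × ((G → ℝ) → ℝ) | ∀ f ∈ B, |p.1 f - p.2 f| ≤ ε}) := by
  have h1 : @uniformity _ (uebB G B) =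
      Filter.comap
        (Prod.map (fun ξ : (G → ℝ) → ℝ => UniformFun.ofFun fun f : B => ξ (f : G → ℝ))
          (fun ξ : (G → ℝ) → ℝ => UniformFun.ofFun fun f : B => ξ (f : G → ℝ)))
        (@uniformity _ (UniformFun.uniformSpace (↥B) ℝ)) := by
    unfold uebB
    exact uniformity_comap _
  rw [h1]
  refine ((UniformFun.hasBasis_uniformity_of_basis (↥B) ℝ
    Metric.uniformity_basis_dist_le).comap _).congr (fun _ => Iff.rfl) ?_
  intro ε _
  ext p
  simp only [Function.comp, Set.mem_preimage, Prod.map, UniformFun.gen,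
    Set.mem_setOf_eq, UniformFun.toFun_ofFun, Subtype.forall, Real.dist_eq]

lemma uebR_uniformity_eq (G : Type*) [Group G] [TopologicalSpace G] :
    @uniformity _ (uebUniformityR G) =
      ⨅ B : {B : Set (G → ℝ) // IsRUEB B}, @uniformity _ (uebB G B.1) := by
  have h1 : @uniformity _ (uebUniformityR G)
      = ⨅ (B : Set (G → ℝ)) (_ : IsRUEB B), @uniformity _ (uebB G B) := by
    unfold uebUniformityR uebB
    rw [iInf_uniformity]
    exact iInf_congr fun B => iInf_uniformity
  rw [h1, iInf_subtype]

lemma uebB_directed (G : Type*) [Group G] [TopologicalSpace G] :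
    Directed (· ≥ ·)
      (fun B : {B : Set (G → ℝ) // IsRUEB B} => @uniformity _ (uebB G B.1)) := by
  intro B₁ B₂
  refine ⟨⟨B₁.1 ∪ B₂.1, isRUEB_union B₁.2 B₂.2⟩, ?_, ?_⟩
  · exact ((uebB_basis _).le_basis_iff (uebB_basis _)).2
      (fun ε hε => ⟨ε, hε, fun p hp f hf => hp f (Or.inl hf)⟩)
  · exact ((uebB_basis _).le_basis_iff (uebB_basis _)).2
      (fun ε hε => ⟨ε, hε, fun p hp f hf => hp f (Or.inr hf)⟩)

lemma uebR_mem_nhds {ξ : (G → ℝ) → ℝ} {N : Set ((G → ℝ) → ℝ)} :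
    N ∈ @nhds _ (uebTopR G) ξ ↔
      ∃ B, IsRUEB B ∧ ∃ ε > (0 : ℝ), {η | ∀ f ∈ B, |ξ f - η f| ≤ ε} ⊆ N := by
  letI : UniformSpace ((G → ℝ) → ℝ) := uebUniformityR G
  haveI : Nonempty {B : Set (G → ℝ) // IsRUEB B} := ⟨⟨∅, isRUEB_empty⟩⟩
  have hn : @nhds _ (uebTopR G) ξ =
      Filter.comap (Prod.mk ξ) (@uniformity _ (uebUniformityR G)) :=
    nhds_eq_comap_uniformity
  rw [hn, uebR_uniformity_eq]
  constructor
  · intro hN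
    obtain ⟨S, hS, hSN⟩ := Filter.mem_comap.1 hN
    obtain ⟨B, hSB⟩ := (Filter.mem_iInf_of_directed (uebB_directed G) S).1 hS
    obtain ⟨ε, hε, hsub⟩ := (uebB_basis B.1).mem_iff.1 hSB
    exact ⟨B.1, B.2, ε, hε, fun η hη => hSN (hsub hη)⟩
  · rintro ⟨B, hB, ε, hε, hsub⟩
    refine Filter.mem_comap.2
      ⟨{p | ∀ f ∈ B, |p.1 f - p.2 f| ≤ ε}, ?_, fun η hη => hsub hη⟩
    exact (Filter.mem_iInf_of_directed (uebB_directed G) _).2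
      ⟨⟨B, hB⟩, (uebB_basis B).mem_iff.2 ⟨ε, hε, subset_rfl⟩⟩

lemma mem_MeanUR_iff {ξ : (G → ℝ) → ℝ} :
    ξ ∈ MeanUR G ↔ ∀ B, IsRUEB B → ∀ ε > (0 : ℝ),
      ∃ μ, IsDelta μ ∧ ∀ f ∈ B, |ξ f - toFunc μ f| ≤ ε := by
  have hc : ξ ∈ MeanUR G ↔
      ∀ N ∈ @nhds _ (uebTopR G) ξ, (N ∩ (toFunc '' {μ : G → ℝ | IsDelta μ})).Nonempty := by
    letI := uebTopR G
    exact mem_closure_iff_nhds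
  rw [hc]
  constructor
  · intro h B hB ε hε
    obtain ⟨η, hη1, μ, hμ, hμη⟩ :=
      h _ (uebR_mem_nhds.2 ⟨B, hB, ε, hε, subset_rfl⟩)
    exact ⟨μ, hμ, fun f hf => by rw [hμη]; exact hη1 f hf⟩
  · intro h N hN
    obtain ⟨B, hB, ε, hε, hsub⟩ := uebR_mem_nhds.1 hN
    obtain ⟨μ, hμ, happ⟩ := h B hB ε hε
    exact ⟨toFunc μ, hsub (fun f hf => happ f hf), ⟨μ, hμ, rfl⟩⟩

lemma ueb_comp_continuous {G H' : Type*} [Group G] [TopologicalSpace G]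
    [Group H'] [TopologicalSpace H'] {L : (H' → ℝ) → (G → ℝ)}
    (hL : ∀ B : Set (H' → ℝ), IsRUEB B → IsRUEB (L '' B)) :
    @Continuous _ _ (uebTopR G) (uebTopR H') (fun ξ f => ξ (L f)) := by
  letI : TopologicalSpace ((G → ℝ) → ℝ) := uebTopR G
  letI : TopologicalSpace ((H' → ℝ) → ℝ) := uebTopR H'
  refine continuous_iff_continuousAt.2 fun ξ => Filter.tendsto_def.2 fun N hN => ?_
  obtain ⟨B, hB, ε, hε, hsub⟩ := uebR_mem_nhds.1 hN
  exact uebR_mem_nhds.2 ⟨L '' B, hL B hB, ε, hε,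
    fun η hη => hsub fun f hf => hη (L f) ⟨f, hf, rfl⟩⟩

lemma continuous_comp_ueb {X G H' : Type*} [TopologicalSpace X] [Group G]
    [TopologicalSpace G] [Group H'] [TopologicalSpace H'] {μ : X → (G → ℝ) → ℝ}
    (hμ : @Continuous X _ _ (uebTopR G) μ) {L : (H' → ℝ) → (G → ℝ)}
    (hL : ∀ B : Set (H' → ℝ), IsRUEB B → IsRUEB (L '' B)) :
    @Continuous X _ _ (uebTopR H') (fun x f => μ x (L f)) := by
  letI : TopologicalSpace ((G → ℝ) → ℝ) := uebTopR G
  letI : TopologicalSpace ((H' → ℝ) → ℝ) := uebTopR H'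
  exact (ueb_comp_continuous hL).comp hμ

end UEBHelpers

section DeltaHelpers

open Function

lemma dpair_eq_sum {A : Type*} {μ f : A → ℝ} {S : Finset A}
    (h : support μ ⊆ S) : dpair μ f = ∑ x ∈ S, μ x * f x :=
  finsum_eq_sum_of_support_subset _ ((support_mul_subset_left μ f).trans h)

lemma abs_dpair_le {A : Type*} {μ f : A → ℝ} (hμ : IsDelta μ) {C : ℝ}
    (hf : ∀ x, |f x| ≤ C) : |dpair μ f| ≤ C := by
  obtain ⟨hfin, hpos, hsum⟩ := hμ
  have hsub : support μ ⊆ hfin.toFinset := fun x hx => hfin.mem_toFinset.2 hx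
  rw [dpair_eq_sum hsub]
  have h1 : ∑ x ∈ hfin.toFinset, μ x = 1 := by
    rw [← finsum_eq_sum_of_support_subset _ hsub]; exact hsum
  calc |∑ x ∈ hfin.toFinset, μ x * f x|
      ≤ ∑ x ∈ hfin.toFinset, |μ x * f x| := Finset.abs_sum_le_sum_abs _ _
    _ ≤ ∑ x ∈ hfin.toFinset, μ x * C := by
        refine Finset.sum_le_sum fun x _ => ?_
        rw [abs_mul, abs_of_nonneg (hpos x)]
        exact mul_le_mul_of_nonneg_left (hf x) (hpos x)
    _ = C := by rw [← Finset.sum_mul, h1, one_mul]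

lemma abs_mean_le {G : Type*} [Group G] [TopologicalSpace G]
    {ξ : (G → ℝ) → ℝ} (hξ : ξ ∈ MeanUR G) {B : Set (G → ℝ)} (hB : IsRUEB B)
    {C : ℝ} (hC : ∀ f ∈ B, ∀ x, |f x| ≤ C) {f : G → ℝ} (hf : f ∈ B) :
    |ξ f| ≤ C := by
  refine le_of_forall_pos_le_add fun ε hε => ?_
  obtain ⟨μ, hμ, h⟩ := mem_MeanUR_iff.1 hξ B hB ε hε
  calc |ξ f| ≤ |toFunc μ f| + |ξ f - toFunc μ f| := by
        have := abs_sub_abs_le_abs_sub (ξ f) (toFunc μ f)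
        linarith [abs_nonneg (ξ f - toFunc μ f)]
    _ ≤ C + ε := add_le_add (abs_dpair_le hμ (hC f hf)) (h f hf)

lemma isDelta_comb {A B : Type*} (S : Finset A) (w : A → ℝ)
    (hw0 : ∀ a ∈ S, 0 ≤ w a) (hw1 : ∑ a ∈ S, w a = 1)
    (ν : A → B → ℝ) (hν : ∀ a ∈ S, IsDelta (ν a)) :
    IsDelta (fun t => ∑ a ∈ S, w a * ν a t) ∧
    ∀ f : B → ℝ,
      dpair (fun t => ∑ a ∈ S, w a * ν a t) f = ∑ a ∈ S, w a * dpair (ν a) f := by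
  classical
  have hTfin : (⋃ a ∈ S, Function.support (ν a)).Finite :=
    Set.Finite.biUnion S.finite_toSet (fun a ha => (hν a ha).1)
  set T : Finset B := hTfin.toFinset with hT
  have hνsub : ∀ a ∈ S, Function.support (ν a) ⊆ T := by
    intro a ha t ht
    exact hTfin.mem_toFinset.2 (Set.mem_biUnion ha ht)
  have hsupp : Function.support (fun t => ∑ a ∈ S, w a * ν a t) ⊆ T := by
    intro t ht
    simp only [Function.mem_support] at ht
    by_contra htT
    apply ht
    refine Finset.sum_eq_zero fun a ha => ?_
    have hz : ν a t = 0 := by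
      by_contra h0
      exact htT (hνsub a ha h0)
    rw [hz, mul_zero]
  have hνsum : ∀ a ∈ S, ∑ t ∈ T, ν a t = 1 := by
    intro a ha
    rw [← finsum_eq_sum_of_support_subset _ (hνsub a ha)]
    exact (hν a ha).2.2
  have hdpair : ∀ f : B → ℝ,
      dpair (fun t => ∑ a ∈ S, w a * ν a t) f = ∑ a ∈ S, w a * dpair (ν a) f := by
    intro f
    rw [dpair_eq_sum hsupp]
    calc ∑ t ∈ T, (∑ a ∈ S, w a * ν a t) * f t
        = ∑ t ∈ T, ∑ a ∈ S, w a * ν a t * f t := by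
          refine Finset.sum_congr rfl fun t _ => ?_
          rw [Finset.sum_mul]
      _ = ∑ a ∈ S, ∑ t ∈ T, w a * ν a t * f t := Finset.sum_comm
      _ = ∑ a ∈ S, w a * dpair (ν a) f := by
          refine Finset.sum_congr rfl fun a ha => ?_
          rw [dpair_eq_sum (hνsub a ha), Finset.mul_sum]
          exact Finset.sum_congr rfl fun t _ => by ring
  refine ⟨⟨Set.Finite.subset T.finite_toSet hsupp, ?_, ?_⟩, hdpair⟩
  · intro t
    exact Finset.sum_nonneg fun a ha => mul_nonneg (hw0 a ha) ((hν a ha).2.1 t)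
  · rw [finsum_eq_sum_of_support_subset _ hsupp]
    calc ∑ t ∈ T, ∑ a ∈ S, w a * ν a t
        = ∑ a ∈ S, ∑ t ∈ T, w a * ν a t := Finset.sum_comm
      _ = ∑ a ∈ S, w a := by
          refine Finset.sum_congr rfl fun a ha => ?_
          rw [← Finset.mul_sum, hνsum a ha, mul_one]
      _ = 1 := hw1

end DeltaHelpers

/-- Theorem 5.6: amenability of a continuous action passes to well-placed subgroups. -/
theorem well_placed_restriction {G : Type*} [Group G] [TopologicalSpace G]
    [IsTopologicalGroup G]
    {X : Type*} [TopologicalSpace X] [CompactSpace X] [T2Space X]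
    [MulAction G X] [ContinuousSMul G X]
    (H : Subgroup G) (hwp : WellPlaced H)
    (hGX : AmenableAction fun (g : G) (x : X) => g • x) :
    AmenableAction fun (h : ↥H) (x : X) => (h : G) • x := by
  classical
  obtain ⟨φ, hφmem, hφequi, hφuc⟩ := hwp
  obtain ⟨ι, pι, hne, hdir, μ, hμmem, hμcont, hμapprox⟩ := hGX
  set L : (↥H → ℝ) → (G → ℝ) := fun f g => φ g f with hLdef
  have hLRUEB : ∀ B : Set (↥H → ℝ), IsRUEB B → IsRUEB (L '' B) := by
    intro B hB
    obtain ⟨⟨C, hC⟩, -⟩ := id hB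
    constructor
    · refine ⟨C, ?_⟩
      rintro F ⟨f, hf, rfl⟩ g
      exact abs_mean_le (hφmem g) hB hC hf
    · intro ε hε
      obtain ⟨U, hU, hUc⟩ := hφuc B hB ε hε
      refine ⟨U⁻¹, inv_mem_nhds_one G hU, ?_⟩
      rintro u hu F ⟨f, hf, rfl⟩ x
      have hx : x * (u * x)⁻¹ ∈ U := by
        have hxe : x * (u * x)⁻¹ = u⁻¹ := by group
        rw [hxe]; exact Set.mem_inv.1 hu
      exact hUc x (u * x) hx f hf
  set Ψ : ((G → ℝ) → ℝ) → ((↥H → ℝ) → ℝ) := fun ξ f => ξ (L f) with hΨdef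
  refine ⟨ι, pι, hne, hdir, fun i x => Ψ (μ i x), ?_, ?_, ?_⟩
  · -- membership in MeanUR ↥H
    intro i x
    rw [mem_MeanUR_iff]
    intro B hB ε hε
    obtain ⟨m, hm, hmapp⟩ := mem_MeanUR_iff.1 (hμmem i x) (L '' B) (hLRUEB B hB)
      (ε / 2) (by linarith)
    have hφapp : ∀ g : G, ∃ ν, IsDelta ν ∧ ∀ f ∈ B, |φ g f - toFunc ν f| ≤ ε / 2 :=
      fun g => mem_MeanUR_iff.1 (hφmem g) B hB (ε / 2) (by linarith)
    choose ν hν1 hν2 using hφapp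
    set S : Finset G := hm.1.toFinset with hSdef
    have hmsub : Function.support m ⊆ S := fun g hg => hm.1.mem_toFinset.2 hg
    have hmsum : ∑ a ∈ S, m a = 1 := by
      rw [← finsum_eq_sum_of_support_subset _ hmsub]; exact hm.2.2
    obtain ⟨hcombD, hcombP⟩ :=
      isDelta_comb S m (fun a _ => hm.2.1 a) hmsum ν (fun a _ => hν1 a)
    refine ⟨_, hcombD, ?_⟩
    intro f hf
    have e1 : toFunc m (L f) = ∑ a ∈ S, m a * φ a f := dpair_eq_sum hmsub
    have key1 : |μ i x (L f) - toFunc m (L f)| ≤ ε / 2 := hmapp (L f) ⟨f, hf, rfl⟩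
    have key2 : |∑ a ∈ S, m a * φ a f - ∑ a ∈ S, m a * dpair (ν a) f| ≤ ε / 2 := by
      rw [← Finset.sum_sub_distrib]
      calc |∑ a ∈ S, (m a * φ a f - m a * dpair (ν a) f)|
          ≤ ∑ a ∈ S, |m a * φ a f - m a * dpair (ν a) f| :=
            Finset.abs_sum_le_sum_abs _ _
        _ ≤ ∑ a ∈ S, m a * (ε / 2) := by
            refine Finset.sum_le_sum fun a _ => ?_
            rw [← mul_sub, abs_mul, abs_of_nonneg (hm.2.1 a)]
            exact mul_le_mul_of_nonneg_left (hν2 a f hf) (hm.2.1 a)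
        _ = ε / 2 := by rw [← Finset.sum_mul, hmsum, one_mul]
    show |μ i x (L f) - dpair (fun t => ∑ a ∈ S, m a * ν a t) f| ≤ ε
    rw [hcombP f]
    calc |μ i x (L f) - ∑ a ∈ S, m a * dpair (ν a) f|
        ≤ |μ i x (L f) - toFunc m (L f)| +
            |toFunc m (L f) - ∑ a ∈ S, m a * dpair (ν a) f| := abs_sub_le _ _ _
      _ ≤ ε / 2 + ε / 2 := add_le_add key1 (by rw [e1]; exact key2)
      _ = ε := by ring
  · -- continuity
    intro i
    exact continuous_comp_ueb (hμcont i) hLRUEB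
  · -- approximate equivariance
    intro h B hB ε hε
    obtain ⟨i₀, hi₀⟩ := hμapprox (h : G) (L '' B) (hLRUEB B hB) ε hε
    refine ⟨i₀, fun i hi x f hf => ?_⟩
    have key : actF h (Ψ (μ i x)) f = actF (h : G) (μ i x) (L f) := by
      show μ i x (L fun t => f (h * t)) = μ i x (fun g => L f ((h : G) * g))
      congr 1
      funext g
      show φ g (fun t => f (h * t)) = φ ((h : G) * g) f
      rw [hφequi h g]
      rfl
    rw [key]
    exact hi₀ i hi x (L f) ⟨f, hf, rfl⟩
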